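/- Death Leaps Principle: In Toads and Frogs, any position containing exactly one empty square, in which the only legal move available to either player is a jump (i.e., the empty square is not adjacent on its left to a Toad with a free move nor adjacent on its right to a Frog with a free move — every legal move is a Toad jumping a Frog or a Frog jumping a Toad into the empty square), has game value 0. -/

import Mathlib

namespace SetTheory

universe u

/-- Pre-games, as in the older Mathlib (`SetTheory.PGame`, removed since). -/
inductive PGame : Type (u + 1)
  | mk : ∀ α β : Type u, (α → PGame) → (β → PGame) → PGame

namespace PGame

/-- Inner recursion (on the right argument) of `leLF`. -/
def leLFAux {xl xr : Type u} (xL : xl → PGame.{u}) (xR : xr → PGame.{u})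
    (IHl : xl → PGame.{u} → Prop × Prop) (IHr : xr → PGame.{u} → Prop × Prop) :
    PGame.{u} → Prop × Prop
  | mk yl yr yL yR =>
    ((∀ i, (IHl i (mk yl yr yL yR)).2) ∧ ∀ j, (leLFAux xL xR IHl IHr (yR j)).2,
      (∃ i, (leLFAux xL xR IHl IHr (yL i)).1) ∨ ∃ j, (IHr j (mk yl yr yL yR)).1)

/-- The pair `(x ≤ y, x ⧏ y)`, defined as in the older Mathlib. -/
def leLF : PGame.{u} → PGame.{u} → Prop × Prop
  | mk _ _ xL xR => leLFAux xL xR (fun i => leLF (xL i)) (fun j => leLF (xR j))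

instance : LE PGame.{u} :=
  ⟨fun x y => (leLF x y).1⟩

/-- Equivalence of pre-games: `x ≤ y ∧ y ≤ x`, as in the older Mathlib. -/
def Equiv (x y : PGame.{u}) : Prop :=
  x ≤ y ∧ y ≤ x

instance : HasEquiv PGame.{u} :=
  ⟨Equiv⟩

instance : Zero PGame.{u} :=
  ⟨mk PEmpty PEmpty PEmpty.elim PEmpty.elim⟩

/-- Negation of pre-games, as in the older Mathlib. -/
def neg : PGame.{u} → PGame.{u}
  | mk _ _ xL xR => mk _ _ (fun j => neg (xR j)) (fun i => neg (xL i))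

instance : Neg PGame.{u} :=
  ⟨neg⟩

end PGame

end SetTheory

open SetTheory

inductive Cell : Type
  | T | F | E
deriving DecidableEq

/-- Positions reachable from `l` by a single Toad (Left) move:
a Toad steps right into an empty square, or jumps over one adjacent Frog
into the empty square beyond. -/
def toadMoves : List Cell → List (List Cell)
  | [] => []
  | c :: rest =>
    (match c, rest with
     | Cell.T, Cell.E :: r => [Cell.E :: Cell.T :: r]
     | Cell.T, Cell.F :: Cell.E :: r => [Cell.E :: Cell.F :: Cell.T :: r]
     | _, _ => []) ++ (toadMoves rest).map (c :: ·)

/-- Positions reachable from `l` by a single Frog (Right) move. -/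
def frogMoves : List Cell → List (List Cell)
  | [] => []
  | c :: rest =>
    (match c, rest with
     | Cell.E, Cell.F :: r => [Cell.F :: Cell.E :: r]
     | Cell.E, Cell.T :: Cell.F :: r => [Cell.F :: Cell.T :: Cell.E :: r]
     | _, _ => []) ++ (frogMoves rest).map (c :: ·)

/-- A weight which strictly decreases with every legal move: each Toad
contributes the number of squares strictly to its right, each Frog the number
of squares strictly to its left. -/
def wt : List Cell → ℕ
  | [] => 0
  | c :: rest =>
    (if c = Cell.T then rest.length else 0) + rest.countP (· = Cell.F) + wt rest

/-- Game tree with fuel; since `wt` strictly decreases along moves and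
positions of weight `0` have no moves, `gameAux n l` is the true game
tree of `l` whenever `wt l ≤ n`. -/
def gameAux : ℕ → List Cell → PGame
  | 0, _ => 0
  | n + 1, l =>
    PGame.mk {m // m ∈ toadMoves l} {m // m ∈ frogMoves l}
      (fun m => gameAux n m.1) (fun m => gameAux n m.1)

/-- The game (PGame) associated to a Toads and Frogs position. -/
def tfGame (l : List Cell) : PGame := gameAux (wt l + 1) l

/-- The game `{x | y}` with a single Left option `x` and single Right option `y`. -/
def gmk (x y : PGame) : PGame :=
  PGame.mk PUnit PUnit (fun _ => x) (fun _ => y)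

/-- The canonical game of a natural number. -/
def natGame : ℕ → PGame
  | 0 => 0
  | n + 1 => PGame.mk PUnit PEmpty (fun _ => natGame n) (fun x => x.elim)

/-- The canonical game of an integer. -/
def intGame : ℤ → PGame
  | Int.ofNat n => natGame n
  | Int.negSucc n => -natGame (n + 1)

/-- `(TF)^b` : the block `TF` repeated `b` times. -/
def tfBlock (b : ℕ) : List Cell := (List.replicate b [Cell.T, Cell.F]).flatten

namespace SetTheory.PGame

universe u

def LeftMoves : PGame.{u} → Type u
  | mk l _ _ _ => l

def RightMoves : PGame.{u} → Type u
  | mk _ r _ _ => r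

def moveLeft : (x : PGame.{u}) → x.LeftMoves → PGame.{u}
  | mk _ _ L _ => L

def moveRight : (x : PGame.{u}) → x.RightMoves → PGame.{u}
  | mk _ _ _ R => R

def LF (x y : PGame.{u}) : Prop := (leLF x y).2

theorem le_iff (x y : PGame.{u}) :
    x ≤ y ↔ (∀ i, LF (x.moveLeft i) y) ∧ ∀ j, LF x (y.moveRight j) := by
  cases x; cases y; exact Iff.rfl

theorem lf_iff (x y : PGame.{u}) :
    LF x y ↔ (∃ i, x ≤ y.moveLeft i) ∨ ∃ j, x.moveRight j ≤ y := by
  cases x; cases y; exact Iff.rfl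

theorem pg_le_refl : ∀ x : PGame.{u}, x ≤ x := by
  intro x
  induction x with
  | mk xl xr xL xR ihl ihr =>
  exact (le_iff _ _).2 ⟨fun i => (lf_iff _ _).2 (Or.inl ⟨i, ihl i⟩),
    fun j => (lf_iff _ _).2 (Or.inr ⟨j, ihr j⟩)⟩

theorem pg_trans_aux : ∀ x y z : PGame.{u},
    (x ≤ y → y ≤ z → x ≤ z) ∧ (x ≤ y → LF y z → LF x z) ∧ (LF x y → y ≤ z → LF x z) := by
  intro x
  induction x with
  | mk xl xr xL xR ihxl ihxr =>
  intro y
  induction y with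
  | mk yl yr yL yR ihyl ihyr =>
  intro z
  induction z with
  | mk zl zr zL zR ihzl ihzr =>
  refine ⟨fun hxy hyz => ?_, fun hxy hyz => ?_, fun hxy hyz => ?_⟩
  · exact (le_iff _ _).2 ⟨fun i => (ihxl i _ _).2.2 (((le_iff _ _).1 hxy).1 i) hyz,
      fun k => (ihzr k).2.1 hxy (((le_iff _ _).1 hyz).2 k)⟩
  · rcases (lf_iff _ _).1 hyz with ⟨k, hk⟩ | ⟨m, hm⟩
    · exact (lf_iff _ _).2 (Or.inl ⟨k, (ihzl k).1 hxy hk⟩)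
    · exact (ihyr m _).2.2 (((le_iff _ _).1 hxy).2 m) hm
  · rcases (lf_iff _ _).1 hxy with ⟨i, hi⟩ | ⟨j, hj⟩
    · exact (ihyl i _).2.1 hi (((le_iff _ _).1 hyz).1 i)
    · exact (lf_iff _ _).2 (Or.inr ⟨j, (ihxr j _ _).1 hj hyz⟩)

theorem pg_le_trans {x y z : PGame.{u}} (h1 : x ≤ y) (h2 : y ≤ z) : x ≤ z :=
  (pg_trans_aux x y z).1 h1 h2

theorem equiv_rfl {x : PGame.{u}} : x ≈ x := ⟨pg_le_refl x, pg_le_refl x⟩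

theorem Equiv.symm {x y : PGame.{u}} (h : x ≈ y) : y ≈ x := ⟨h.2, h.1⟩

theorem Equiv.trans {x y z : PGame.{u}} (h1 : x ≈ y) (h2 : y ≈ z) : x ≈ z :=
  ⟨pg_le_trans h1.1 h2.1, pg_le_trans h2.2 h1.2⟩

theorem Equiv.of_equiv {x y : PGame.{u}} (L : x.LeftMoves ≃ y.LeftMoves)
    (R : x.RightMoves ≃ y.RightMoves) (hl : ∀ i, x.moveLeft i ≈ y.moveLeft (L i))
    (hr : ∀ j, x.moveRight j ≈ y.moveRight (R j)) : x ≈ y := by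
  refine ⟨(le_iff _ _).2 ⟨fun i => (lf_iff _ _).2 (Or.inl ⟨L i, (hl i).1⟩), fun j => ?_⟩,
    (le_iff _ _).2 ⟨fun i => ?_, fun j => (lf_iff _ _).2 (Or.inr ⟨R j, (hr j).2⟩)⟩⟩
  · have h := (hr (R.symm j)).1
    rw [R.apply_symm_apply] at h
    exact (lf_iff _ _).2 (Or.inr ⟨R.symm j, h⟩)
  · have h := (hl (L.symm i)).2
    rw [L.apply_symm_apply] at h
    exact (lf_iff _ _).2 (Or.inl ⟨L.symm i, h⟩)

theorem le_zero {x : PGame.{u}} : x ≤ 0 ↔ ∀ i, ∃ j, (x.moveLeft i).moveRight j ≤ 0 := by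
  rw [le_iff]
  constructor
  · rintro ⟨h, -⟩ i
    rcases (lf_iff _ _).1 (h i) with ⟨i', -⟩ | h'
    · exact PEmpty.elim i'
    · exact h'
  · intro h
    exact ⟨fun i => (lf_iff _ _).2 (Or.inr (h i)), fun j => PEmpty.elim j⟩

theorem zero_le {x : PGame.{u}} : 0 ≤ x ↔ ∀ j, ∃ i, 0 ≤ (x.moveRight j).moveLeft i := by
  rw [le_iff]
  constructor
  · rintro ⟨-, h⟩ j
    rcases (lf_iff _ _).1 (h j) with h' | ⟨j', -⟩
    · exact h'
    · exact PEmpty.elim j'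
  · intro h
    exact ⟨fun i => PEmpty.elim i, fun j => (lf_iff _ _).2 (Or.inl (h j))⟩

theorem le_zero_of_isEmpty_leftMoves (x : PGame.{u}) [IsEmpty x.LeftMoves] : x ≤ 0 :=
  (le_iff _ _).2 ⟨fun i => isEmptyElim i, fun j => PEmpty.elim j⟩

theorem zero_le_of_isEmpty_rightMoves (x : PGame.{u}) [IsEmpty x.RightMoves] : 0 ≤ x :=
  (le_iff _ _).2 ⟨fun i => PEmpty.elim i, fun j => isEmptyElim j⟩

end SetTheory.PGame

open Cell

lemma toadMoves_cons (c : Cell) (rest : List Cell) : toadMoves (c :: rest) =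
    (match c, rest with
     | Cell.T, Cell.E :: r => [Cell.E :: Cell.T :: r]
     | Cell.T, Cell.F :: Cell.E :: r => [Cell.E :: Cell.F :: Cell.T :: r]
     | _, _ => []) ++ (toadMoves rest).map (c :: ·) := rfl

lemma frogMoves_cons (c : Cell) (rest : List Cell) : frogMoves (c :: rest) =
    (match c, rest with
     | Cell.E, Cell.F :: r => [Cell.F :: Cell.E :: r]
     | Cell.E, Cell.T :: Cell.F :: r => [Cell.F :: Cell.T :: Cell.E :: r]
     | _, _ => []) ++ (frogMoves rest).map (c :: ·) := rfl

lemma mem_toadMoves : ∀ (l m : List Cell), m ∈ toadMoves l →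
    (∃ a b, l = a ++ [T, E] ++ b ∧ m = a ++ [E, T] ++ b) ∨
    (∃ a b, l = a ++ [T, F, E] ++ b ∧ m = a ++ [E, F, T] ++ b) := by
  intro l
  induction l with
  | nil => intro m h; simp [toadMoves] at h
  | cons c rest ih =>
    intro m h
    rw [toadMoves_cons, List.mem_append] at h
    rcases h with h | h
    · cases c with
      | F => simp at h
      | E => simp at h
      | T =>
        cases rest with
        | nil => simp at h
        | cons d r =>
          cases d with
          | T => simp at h
          | E =>
            simp at h
            exact Or.inl ⟨[], r, rfl, by simp [h]⟩
          | F =>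
            cases r with
            | nil => simp at h
            | cons e r2 =>
              cases e with
              | T => simp at h
              | F => simp at h
              | E =>
                simp at h
                exact Or.inr ⟨[], r2, rfl, by simp [h]⟩
    · obtain ⟨m0, hm0, rfl⟩ := List.mem_map.1 h
      rcases ih m0 hm0 with ⟨a, b, h1, h2⟩ | ⟨a, b, h1, h2⟩
      · exact Or.inl ⟨c :: a, b, by simp [h1], by simp [h2]⟩
      · exact Or.inr ⟨c :: a, b, by simp [h1], by simp [h2]⟩

lemma mem_frogMoves : ∀ (l m : List Cell), m ∈ frogMoves l →
    (∃ a b, l = a ++ [E, F] ++ b ∧ m = a ++ [F, E] ++ b) ∨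
    (∃ a b, l = a ++ [E, T, F] ++ b ∧ m = a ++ [F, T, E] ++ b) := by
  intro l
  induction l with
  | nil => intro m h; simp [frogMoves] at h
  | cons c rest ih =>
    intro m h
    rw [frogMoves_cons, List.mem_append] at h
    rcases h with h | h
    · cases c with
      | F => simp at h
      | T => simp at h
      | E =>
        cases rest with
        | nil => simp at h
        | cons d r =>
          cases d with
          | E => simp at h
          | F =>
            simp at h
            exact Or.inl ⟨[], r, rfl, by simp [h]⟩
          | T =>
            cases r with
            | nil => simp at h
            | cons e r2 =>
              cases e with
              | T => simp at h
              | E => simp at h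
              | F =>
                simp at h
                exact Or.inr ⟨[], r2, rfl, by simp [h]⟩
    · obtain ⟨m0, hm0, rfl⟩ := List.mem_map.1 h
      rcases ih m0 hm0 with ⟨a, b, h1, h2⟩ | ⟨a, b, h1, h2⟩
      · exact Or.inl ⟨c :: a, b, by simp [h1], by simp [h2]⟩
      · exact Or.inr ⟨c :: a, b, by simp [h1], by simp [h2]⟩

lemma toad_simple_mem : ∀ (a b : List Cell), a ++ [E, T] ++ b ∈ toadMoves (a ++ [T, E] ++ b) := by
  intro a
  induction a with
  | nil => intro b; simp [toadMoves]
  | cons c a ih =>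
    intro b
    simp only [List.cons_append]
    rw [toadMoves_cons]
    exact List.mem_append_right _ (List.mem_map_of_mem (ih b))

lemma frog_simple_mem : ∀ (a b : List Cell), a ++ [F, E] ++ b ∈ frogMoves (a ++ [E, F] ++ b) := by
  intro a
  induction a with
  | nil => intro b; simp [frogMoves]
  | cons c a ih =>
    intro b
    simp only [List.cons_append]
    rw [frogMoves_cons]
    exact List.mem_append_right _ (List.mem_map_of_mem (ih b))

lemma wt_append (x y : List Cell) : wt (x ++ y) =
    wt x + wt y + x.countP (· = Cell.T) * y.length + y.countP (· = Cell.F) * x.length := by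
  induction x with
  | nil => simp [wt]
  | cons c x ih =>
    simp only [List.cons_append, wt, List.countP_cons, List.countP_append,
      List.length_append, List.length_cons]
    cases c <;> simp [ih] <;> ring

lemma wt_replace (a b x y : List Cell) (h1 : x.length = y.length)
    (h2 : x.countP (· = Cell.T) = y.countP (· = Cell.T))
    (h3 : x.countP (· = Cell.F) = y.countP (· = Cell.F))
    (h4 : wt x < wt y) : wt (a ++ x ++ b) < wt (a ++ y ++ b) := by
  simp only [wt_append, List.countP_append, List.length_append, h1, h2, h3]
  linarith

lemma wt_toad_lt {l m : List Cell} (h : m ∈ toadMoves l) : wt m < wt l := by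
  rcases mem_toadMoves l m h with ⟨a, b, rfl, rfl⟩ | ⟨a, b, rfl, rfl⟩
  · exact wt_replace a b _ _ (by decide) (by decide) (by decide) (by decide)
  · exact wt_replace a b _ _ (by decide) (by decide) (by decide) (by decide)

lemma wt_frog_lt {l m : List Cell} (h : m ∈ frogMoves l) : wt m < wt l := by
  rcases mem_frogMoves l m h with ⟨a, b, rfl, rfl⟩ | ⟨a, b, rfl, rfl⟩
  · exact wt_replace a b _ _ (by decide) (by decide) (by decide) (by decide)
  · exact wt_replace a b _ _ (by decide) (by decide) (by decide) (by decide)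

lemma uniqueE : ∀ (s : List Cell) (s' t t' : List Cell), E ∉ s → E ∉ s' →
    s ++ E :: t = s' ++ E :: t' → s = s' ∧ t = t' := by
  intro s
  induction s with
  | nil =>
    intro s' t t' _ hs' h
    cases s' with
    | nil => simpa using h
    | cons c s' =>
      simp only [List.nil_append, List.cons_append, List.cons.injEq] at h
      exact absurd (h.1 ▸ List.mem_cons_self (a := c) (l := s')) hs'
  | cons c s ihs =>
    intro s' t t' hs hs' h
    cases s' with
    | nil =>
      simp only [List.cons_append, List.nil_append, List.cons.injEq] at h
      exact absurd (h.1.symm ▸ List.mem_cons_self (a := c) (l := s)) hs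
    | cons c' s'' =>
      simp only [List.cons_append, List.cons.injEq] at h
      obtain ⟨h1, h2⟩ := ihs s'' t t' (fun hm => hs (List.mem_cons_of_mem _ hm))
        (fun hm => hs' (List.mem_cons_of_mem _ hm)) h.2
      exact ⟨by rw [h.1, h1], h2⟩

lemma moves_nil {l : List Cell} (h : wt l = 0) : toadMoves l = [] ∧ frogMoves l = [] := by
  constructor <;> rw [List.eq_nil_iff_forall_not_mem] <;> intro m hm
  · exact absurd (wt_toad_lt hm) (by omega)
  · exact absurd (wt_frog_lt hm) (by omega)

lemma gameAux_equiv_zero {l : List Cell} (ht : toadMoves l = []) (hf : frogMoves l = [])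
    (n : ℕ) : gameAux n l ≈ 0 := by
  cases n with
  | zero => exact PGame.equiv_rfl
  | succ n =>
    have e1 : IsEmpty {m // m ∈ toadMoves l} := by
      constructor; rintro ⟨x, hx⟩; rw [ht] at hx; exact List.not_mem_nil hx
    have e2 : IsEmpty {m // m ∈ frogMoves l} := by
      constructor; rintro ⟨x, hx⟩; rw [hf] at hx; exact List.not_mem_nil hx
    haveI eL : IsEmpty (gameAux (n + 1) l).LeftMoves := e1
    haveI eR : IsEmpty (gameAux (n + 1) l).RightMoves := e2
    exact ⟨PGame.le_zero_of_isEmpty_leftMoves _, PGame.zero_le_of_isEmpty_rightMoves _⟩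

lemma gameAux_congr : ∀ (n m : ℕ) (l : List Cell), wt l ≤ n → wt l ≤ m →
    gameAux n l ≈ gameAux m l := by
  intro n
  induction n with
  | zero =>
    intro m l h1 _
    obtain ⟨ht, hf⟩ := moves_nil (Nat.le_zero.1 h1)
    exact PGame.Equiv.trans (gameAux_equiv_zero ht hf 0) (PGame.Equiv.symm (gameAux_equiv_zero ht hf m))
  | succ n ih =>
    intro m l h1 h2
    cases m with
    | zero =>
      obtain ⟨ht, hf⟩ := moves_nil (Nat.le_zero.1 h2)
      exact PGame.Equiv.trans (gameAux_equiv_zero ht hf (n + 1)) (PGame.Equiv.symm (gameAux_equiv_zero ht hf 0))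
    | succ m =>
      refine PGame.Equiv.of_equiv (_root_.Equiv.refl _) (_root_.Equiv.refl _) ?_ ?_
      · intro i
        exact ih m i.1 (by have := wt_toad_lt i.2; omega) (by have := wt_toad_lt i.2; omega)
      · intro j
        exact ih m j.1 (by have := wt_frog_lt j.2; omega) (by have := wt_frog_lt j.2; omega)

lemma mid_hyps (a b : List Cell) (ha : E ∉ a) (hb : E ∉ b) :
    (a ++ [F, E, T] ++ b).count E = 1 ∧
    ¬ [T, E] <:+: (a ++ [F, E, T] ++ b) ∧
    ¬ [E, F] <:+: (a ++ [F, E, T] ++ b) := by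
  have hcount : (a ++ [F, E, T] ++ b).count E = 1 := by
    simp [List.count_append, List.count_eq_zero.2 ha, List.count_eq_zero.2 hb]
  refine ⟨hcount, ?_, ?_⟩
  · rintro ⟨u, v, huv⟩
    have hu : E ∉ u := by
      intro hmem
      have h1 := hcount
      rw [← huv] at h1
      have h2 := List.count_pos_iff.2 hmem
      simp [List.count_append, List.count_cons] at h1
      omega
    have h := uniqueE (u ++ [T]) (a ++ [F]) v (T :: b) (by simp [hu]) (by simp [ha])
      (by simpa using huv)
    simpa using (List.append_inj' h.1 rfl).2
  · rintro ⟨u, v, huv⟩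
    have hu : E ∉ u := by
      intro hmem
      have h1 := hcount
      rw [← huv] at h1
      have h2 := List.count_pos_iff.2 hmem
      simp [List.count_append, List.count_cons] at h1
      omega
    have h := uniqueE u (a ++ [F]) (F :: v) (T :: b) hu (by simp [ha]) (by simpa using huv)
    obtain ⟨-, h2⟩ := h
    simp at h2

lemma main : ∀ (n : ℕ) (l : List Cell), wt l < n → l.count E = 1 →
    ¬ [T, E] <:+: l → ¬ [E, F] <:+: l → gameAux n l ≈ 0 := by
  intro n
  induction n with
  | zero => intro l h; omega
  | succ k ih =>
    intro l hw hE hT hF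
    constructor
    · rw [PGame.le_zero]
      rintro ⟨m, hm⟩
      have hwm : wt m < wt l := wt_toad_lt hm
      rcases mem_toadMoves l m hm with ⟨a, b, hl, hmv⟩ | ⟨a, b, hl, hmv⟩
      · exact absurd ⟨a, b, hl.symm⟩ hT
      · have hab : a.count E = 0 ∧ b.count E = 0 := by
          rw [hl] at hE
          simp [List.count_append, List.count_cons] at hE
          omega
        obtain ⟨k', rfl⟩ : ∃ k', k = k' + 1 := ⟨k - 1, by omega⟩
        subst hmv
        refine ⟨⟨a ++ [F, E, T] ++ b, ?_⟩, ?_⟩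
        · simpa using frog_simple_mem a (T :: b)
        · obtain ⟨hc, hT', hF'⟩ :=
            mid_hyps a b (List.count_eq_zero.1 hab.1) (List.count_eq_zero.1 hab.2)
          have hwm' : wt (a ++ [F, E, T] ++ b) < wt (a ++ [E, F, T] ++ b) :=
            wt_replace a b _ _ (by decide) (by decide) (by decide) (by decide)
          have heq := gameAux_congr k' (k' + 1) (a ++ [F, E, T] ++ b)
            (by omega) (by omega)
          have h0 := ih (a ++ [F, E, T] ++ b) (by omega) hc hT' hF'
          exact (PGame.Equiv.trans heq h0).1
    · rw [PGame.zero_le]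
      rintro ⟨m, hm⟩
      have hwm : wt m < wt l := wt_frog_lt hm
      rcases mem_frogMoves l m hm with ⟨a, b, hl, hmv⟩ | ⟨a, b, hl, hmv⟩
      · exact absurd ⟨a, b, hl.symm⟩ hF
      · have hab : a.count E = 0 ∧ b.count E = 0 := by
          rw [hl] at hE
          simp [List.count_append, List.count_cons] at hE
          omega
        obtain ⟨k', rfl⟩ : ∃ k', k = k' + 1 := ⟨k - 1, by omega⟩
        subst hmv
        refine ⟨⟨a ++ [F, E, T] ++ b, ?_⟩, ?_⟩
        · simpa using toad_simple_mem (a ++ [F]) b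
        · obtain ⟨hc, hT', hF'⟩ :=
            mid_hyps a b (List.count_eq_zero.1 hab.1) (List.count_eq_zero.1 hab.2)
          have hwm' : wt (a ++ [F, E, T] ++ b) < wt (a ++ [F, T, E] ++ b) :=
            wt_replace a b _ _ (by decide) (by decide) (by decide) (by decide)
          have heq := gameAux_congr k' (k' + 1) (a ++ [F, E, T] ++ b)
            (by omega) (by omega)
          have h0 := ih (a ++ [F, E, T] ++ b) (by omega) hc hT' hF'
          exact (PGame.Equiv.trans heq h0).2


/-- **Death Leaps Principle**: a position with exactly one empty square in which
neither player has a simple (non-jump) move -- i.e. every legal move is a jump --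
has game value `0`. -/
theorem death_leaps_principle (l : List Cell)
    (hE : l.count Cell.E = 1)
    (hT : ¬ [Cell.T, Cell.E] <:+: l)
    (hF : ¬ [Cell.E, Cell.F] <:+: l) :
    tfGame l ≈ 0 :=
  main (wt l + 1) l (by omega) hE hT hF
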